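/- Let n(t) ∈ ℝ₊^{Ω} solve the linear ODE dn/dt = A n with n(0) = n⁰, set N_α(t) = Σ_{j∈α} n_j(t), and define the individual fluxes I_{αβ}^{ij}(t) = λ_{ij} (n_α(t))_i for α ≠ β, i ∈ α, j ∈ β. Then: (1) (d/dt)N_α(t) = Σ_{i∈α} Σ_{β∈X∖{α}} Σ_{j∈β} I_{βα}^{ji}(t) − Σ_{i∈α} Σ_{β∈X∖{α}} Σ_{j∈β} I_{αβ}^{ij}(t); and (2) the fluxes satisfy the renewal equations I_{αβ}^{ij}(t) = Ī_{αβ}^{ij}(t) + Σ_{r∈α} Σ_{γ∈X∖{α}} Σ_{m∈γ} ∫₀ᵗ Ψ_{αβ}(t−s; r, i, j) I_{γα}^{mr}(s) ds, with kernels Ψ_{αβ}(t; r, i, j) = λ_{ij} (exp(t A_{αα}))_{ir} and forcing functions Ī_{αβ}^{ij}(t) = Σ_{r∈α} Ψ_{αβ}(t; r, i, j) (n_α⁰)_r. -/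

import Mathlib

open MeasureTheory Matrix NormedSpace

variable {Ω X : Type*}

/-- The block `A_{αβ}` of a matrix `A : ℝ^{Ω×Ω}` with respect to the partition of `Ω`
into the fibers of `π : Ω → X`. -/
def blockM [DecidableEq X] (A : Matrix Ω Ω ℝ) (π : Ω → X) (α β : X) :
    Matrix {i : Ω // π i = α} {j : Ω // π j = β} ℝ :=
  fun i j => A i.1 j.1

/-- Entrywise derivative of `u ↦ exp (u • B)` for a real matrix `B`. -/
lemma expEntry_hasDerivAt {m : Type*} [Fintype m] [DecidableEq m]
    (B : Matrix m m ℝ) (u : ℝ) (i r : m) :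
    HasDerivAt (fun v : ℝ => exp (v • B) i r) ((exp (u • B) * B) i r) u := by
  letI : NormedAddCommGroup (Matrix m m ℝ) := Matrix.linftyOpNormedAddCommGroup
  letI : NormedRing (Matrix m m ℝ) := Matrix.linftyOpNormedRing
  letI : NormedAlgebra ℝ (Matrix m m ℝ) := Matrix.linftyOpNormedAlgebra
  haveI : CompleteSpace (Matrix m m ℝ) := FiniteDimensional.complete ℝ _
  have h := hasDerivAt_exp_smul_const (𝕂 := ℝ) B u
  let L : Matrix m m ℝ →ₗ[ℝ] ℝ :=
    { toFun := fun M => M i r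
      map_add' := fun x y => rfl
      map_smul' := fun c x => rfl }
  have hL : Continuous L := L.continuous_of_finiteDimensional
  exact (ContinuousLinearMap.hasFDerivAt ⟨L, hL⟩).comp_hasDerivAt u h

/-- Summing fiberwise over all fibers except the fiber of `α` equals summing over the
complement of the fiber of `α`. -/
lemma sum_fiber_erase [Fintype Ω] [Fintype X] [DecidableEq X]
    (π : Ω → X) (α : X) (G : Ω → ℝ) :
    ∑ β ∈ Finset.univ.erase α, ∑ j : {j : Ω // π j = β}, G j.1
      = ∑ j : {j : Ω // ¬ π j = α}, G j.1 := by
  classical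
  have h1 : ∑ β : X, ∑ j : {j : Ω // π j = β}, G j.1 = ∑ j, G j :=
    Fintype.sum_fiberwise π G
  have h2 : (∑ j : {j : Ω // π j = α}, G j.1) + ∑ j : {j : Ω // ¬ π j = α}, G j.1
      = ∑ j, G j := Fintype.sum_subtype_add_sum_subtype _ G
  have h3 : (∑ β ∈ Finset.univ.erase α, ∑ j : {j : Ω // π j = β}, G j.1)
      + ∑ j : {j : Ω // π j = α}, G j.1
      = ∑ β : X, ∑ j : {j : Ω // π j = β}, G j.1 :=
    Finset.sum_erase_add _ _ (Finset.mem_univ α)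
  linarith

theorem ode_individual_fluxes_renewal [Fintype Ω] [DecidableEq Ω] [Fintype X] [DecidableEq X]
    (A : Matrix Ω Ω ℝ) (π : Ω → X)
    (hoffdiag : ∀ i j, i ≠ j → 0 ≤ A i j)
    (hcolsum : ∀ j, ∑ i, A i j = 0)
    (n : ℝ → Ω → ℝ) (n0 : Ω → ℝ)
    (hODE : ∀ i t, HasDerivAt (fun s => n s i) (A.mulVec (n t) i) t)
    (hinit : n 0 = n0)
    (hnonneg : ∀ t, 0 ≤ t → ∀ i, 0 ≤ n t i)
    -- the compartment concentrations
    (N : X → ℝ → ℝ) (hN : ∀ α t, N α t = ∑ i : {i : Ω // π i = α}, n t i.1)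
    -- the individual fluxes `I_{αβ}^{ij}(t) = λ_{ij} (n_α(t))_i`, `λ_{ij} = A_{ji}`
    (I : Ω → Ω → ℝ → ℝ) (hI : ∀ i j t, I i j t = A j i * n t i)
    -- the kernels `Ψ_{αβ}(t; r, i, j) = λ_{ij} (e^{tA_{αα}})_{ir}`
    (Ψ : (α β : X) → ℝ → {r : Ω // π r = α} → {i : Ω // π i = α} →
        {j : Ω // π j = β} → ℝ)
    (hΨ : ∀ α β t r i j, Ψ α β t r i j = A j.1 i.1 * exp (t • blockM A π α α) i r)
    -- the forcing functions `Ī_{αβ}^{ij}(t) = ∑_{r∈α} Ψ_{αβ}(t;r,i,j)(n_α⁰)_r`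
    (Ibar : (α β : X) → {i : Ω // π i = α} → {j : Ω // π j = β} → ℝ → ℝ)
    (hIbar : ∀ α β i j t, Ibar α β i j t = ∑ r : {r : Ω // π r = α}, Ψ α β t r i j * n0 r.1) :
    -- (1) evolution of the compartment concentrations
    (∀ α t, HasDerivAt (N α)
      ((∑ i : {i : Ω // π i = α}, ∑ β ∈ Finset.univ.erase α,
          ∑ j : {j : Ω // π j = β}, I j.1 i.1 t) -
       (∑ i : {i : Ω // π i = α}, ∑ β ∈ Finset.univ.erase α,
          ∑ j : {j : Ω // π j = β}, I i.1 j.1 t)) t) ∧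
    -- (2) the renewal equations for the individual fluxes
    (∀ (α β : X), α ≠ β → ∀ (i : {i : Ω // π i = α}) (j : {j : Ω // π j = β}) (t : ℝ),
      0 ≤ t →
      I i.1 j.1 t = Ibar α β i j t +
        ∑ r : {r : Ω // π r = α}, ∑ γ ∈ Finset.univ.erase α,
          ∑ m : {m : Ω // π m = γ},
            ∫ s in (0:ℝ)..t, Ψ α β (t - s) r i j * I m.1 r.1 s) := by
  classical
  have hcontn : ∀ k : Ω, Continuous fun s => n s k := by
    intro k
    have hd : Differentiable ℝ (fun s => n s k) := fun s => (hODE k s).differentiableAt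
    exact hd.continuous
  constructor
  · -- part (1)
    intro α t
    have hd : HasDerivAt (N α) (∑ i : {i : Ω // π i = α}, A.mulVec (n t) i.1) t := by
      have hfun : N α = fun s => ∑ i : {i : Ω // π i = α}, n s i.1 := funext fun s => hN α s
      rw [hfun]
      exact HasDerivAt.fun_sum fun i _ => hODE i.1 t
    convert hd using 1
    simp only [hI]
    have e1 : ∀ (i : Ω),
        (∑ β ∈ Finset.univ.erase α, ∑ j : {j : Ω // π j = β}, A i j.1 * n t j.1)
          = ∑ j : {j : Ω // ¬ π j = α}, A i j.1 * n t j.1 :=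
      fun i => sum_fiber_erase π α fun j => A i j * n t j
    have e2 : ∀ (i : Ω),
        (∑ β ∈ Finset.univ.erase α, ∑ j : {j : Ω // π j = β}, A j.1 i * n t i)
          = ∑ j : {j : Ω // ¬ π j = α}, A j.1 i * n t i :=
      fun i => sum_fiber_erase π α fun j => A j i * n t i
    simp only [e1, e2]
    have split : ∀ i : {i : Ω // π i = α}, A.mulVec (n t) i.1
        = (∑ j : {j : Ω // π j = α}, A i.1 j.1 * n t j.1)
          + ∑ j : {j : Ω // ¬ π j = α}, A i.1 j.1 * n t j.1 := by
      intro i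
      have := (Fintype.sum_subtype_add_sum_subtype (fun x => π x = α)
        (fun x => A i.1 x * n t x)).symm
      simpa [Matrix.mulVec, dotProduct] using this
    simp only [split]
    rw [Finset.sum_add_distrib]
    have key : (∑ i : {i : Ω // π i = α}, ∑ j : {j : Ω // π j = α}, A i.1 j.1 * n t j.1)
        + ∑ i : {i : Ω // π i = α}, ∑ j : {j : Ω // ¬ π j = α}, A j.1 i.1 * n t i.1 = 0 := by
      have hcomm : (∑ i : {i : Ω // π i = α}, ∑ j : {j : Ω // π j = α}, A i.1 j.1 * n t j.1)
          = ∑ j : {j : Ω // π j = α}, ∑ i : {i : Ω // π i = α}, A i.1 j.1 * n t j.1 :=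
        Finset.sum_comm
      rw [hcomm, ← Finset.sum_add_distrib]
      apply Finset.sum_eq_zero
      intro x _
      have hsp := Fintype.sum_subtype_add_sum_subtype (fun y => π y = α) (fun y => A y x.1)
      have h0 := hcolsum x.1
      rw [← Finset.sum_mul, ← Finset.sum_mul, ← add_mul, hsp, h0, zero_mul]
    linarith
  · -- part (2)
    intro α β hαβ i j t ht
    set B : Matrix {r : Ω // π r = α} {r : Ω // π r = α} ℝ := blockM A π α α with hB
    have hE : ∀ (u : ℝ) (a b : {r : Ω // π r = α}),
        HasDerivAt (fun v : ℝ => exp (v • B) a b) ((exp (u • B) * B) a b) u :=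
      fun u a b => expEntry_hasDerivAt B u a b
    have hcontE : ∀ a b : {r : Ω // π r = α}, Continuous fun u : ℝ => exp (u • B) a b := by
      intro a b
      have hd : Differentiable ℝ (fun u : ℝ => exp (u • B) a b) :=
        fun u => (hE u a b).differentiableAt
      exact hd.continuous
    set f : ℝ → {r : Ω // π r = α} → ℝ :=
      fun s r => ∑ m : {m : Ω // ¬ π m = α}, A r.1 m.1 * n s m.1 with hf
    have hcontf : ∀ r, Continuous fun s => f s r := by
      intro r
      apply continuous_finset_sum
      intro m _
      exact continuous_const.mul (hcontn m.1)
    set g : ℝ → ℝ :=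
      fun s => ∑ r : {r : Ω // π r = α}, exp ((t - s) • B) i r * n s r.1 with hg
    -- derivative of g
    have hgderiv : ∀ s : ℝ,
        HasDerivAt g (∑ r : {r : Ω // π r = α}, exp ((t - s) • B) i r * f s r) s := by
      intro s
      have hterm : ∀ r : {r : Ω // π r = α},
          HasDerivAt (fun v => exp ((t - v) • B) i r * n v r.1)
            (-((exp ((t - s) • B) * B) i r) * n s r.1
              + exp ((t - s) • B) i r * A.mulVec (n s) r.1) s := by
        intro r
        have hc : HasDerivAt (fun v : ℝ => t - v) (-1) s := (hasDerivAt_id s).const_sub t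
        have h1 : HasDerivAt (fun v : ℝ => exp ((t - v) • B) i r)
            (-((exp ((t - s) • B) * B) i r)) s := by
          have h2 := (hE (t - s) i r).comp s hc
          simp [Function.comp, mul_comm] at h2
          exact h2
        exact h1.mul (hODE r.1 s)
      have hsum := HasDerivAt.fun_sum fun r (_ : r ∈ Finset.univ) => hterm r
      have hDval : (∑ r : {r : Ω // π r = α},
            (-((exp ((t - s) • B) * B) i r) * n s r.1
              + exp ((t - s) • B) i r * A.mulVec (n s) r.1))
          = ∑ r : {r : Ω // π r = α}, exp ((t - s) • B) i r * f s r := by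
        have hsplit : ∀ r : {r : Ω // π r = α}, A.mulVec (n s) r.1
            = (∑ k : {k : Ω // π k = α}, A r.1 k.1 * n s k.1) + f s r := by
          intro r
          have := (Fintype.sum_subtype_add_sum_subtype (fun x => π x = α)
            (fun x => A r.1 x * n s x)).symm
          simpa [Matrix.mulVec, dotProduct, hf] using this
        simp only [hsplit, mul_add]
        rw [Finset.sum_add_distrib, Finset.sum_add_distrib]
        have hcancel : (∑ r : {r : Ω // π r = α}, -((exp ((t - s) • B) * B) i r) * n s r.1)
            + ∑ r : {r : Ω // π r = α},
                exp ((t - s) • B) i r * ∑ k : {k : Ω // π k = α}, A r.1 k.1 * n s k.1 = 0 := by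
          have h1 : (∑ r : {r : Ω // π r = α}, ((exp ((t - s) • B) * B) i r) * n s r.1)
              = ∑ r : {r : Ω // π r = α},
                  exp ((t - s) • B) i r * ∑ k : {k : Ω // π k = α}, A r.1 k.1 * n s k.1 := by
            simp only [Matrix.mul_apply, Finset.sum_mul, Finset.mul_sum]
            rw [Finset.sum_comm]
            refine Finset.sum_congr rfl fun r _ => Finset.sum_congr rfl fun k _ => ?_
            simp only [hB, blockM]
            ring
          have h2 : (∑ r : {r : Ω // π r = α}, -((exp ((t - s) • B) * B) i r) * n s r.1)
              = -(∑ r : {r : Ω // π r = α}, ((exp ((t - s) • B) * B) i r) * n s r.1) := by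
            rw [← Finset.sum_neg_distrib]
            exact Finset.sum_congr rfl fun r _ => by ring
          rw [h2, h1]
          ring
        linarith
      rw [← hDval]
      exact hsum
    -- fundamental theorem of calculus
    have hcont_integrand : Continuous fun s => ∑ r : {r : Ω // π r = α},
        exp ((t - s) • B) i r * f s r := by
      apply continuous_finset_sum
      intro r _
      exact ((hcontE i r).comp (continuous_const.sub continuous_id)).mul (hcontf r)
    have hFTC : (∫ s in (0:ℝ)..t, ∑ r : {r : Ω // π r = α}, exp ((t - s) • B) i r * f s r)
        = g t - g 0 :=
      intervalIntegral.integral_eq_sub_of_hasDerivAt (fun s _ => hgderiv s)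
        (hcont_integrand.intervalIntegrable 0 t)
    have hgt : g t = n t i.1 := by
      simp [hg, sub_self, zero_smul, exp_zero, Matrix.one_apply]
    have hg0 : g 0 = ∑ r : {r : Ω // π r = α}, exp (t • B) i r * n0 r.1 := by
      simp [hg, hinit]
    have hmain : n t i.1 = (∑ r : {r : Ω // π r = α}, exp (t • B) i r * n0 r.1)
        + ∫ s in (0:ℝ)..t, ∑ r : {r : Ω // π r = α}, exp ((t - s) • B) i r * f s r := by
      rw [hFTC, hgt, hg0]; ring
    -- assemble the goal
    rw [hI, hIbar]
    simp only [hΨ, ← hB]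
    have hcollapse : ∀ r : {r : Ω // π r = α},
        (∑ γ ∈ Finset.univ.erase α, ∑ m : {m : Ω // π m = γ},
            ∫ s in (0:ℝ)..t, A j.1 i.1 * exp ((t - s) • B) i r * I m.1 r.1 s)
          = ∑ m : {m : Ω // ¬ π m = α},
              ∫ s in (0:ℝ)..t, A j.1 i.1 * exp ((t - s) • B) i r * I m.1 r.1 s :=
      fun r => sum_fiber_erase π α fun m =>
        ∫ s in (0:ℝ)..t, A j.1 i.1 * exp ((t - s) • B) i r * I m r.1 s
    simp only [hcollapse]
    have hIcont : ∀ (m r : Ω), Continuous fun s => I m r s := by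
      intro m r
      have : (fun s => I m r s) = fun s => A r m * n s m := funext fun s => hI m r s
      rw [this]
      exact continuous_const.mul (hcontn m)
    have hswap : ∀ r : {r : Ω // π r = α},
        (∑ m : {m : Ω // ¬ π m = α},
            ∫ s in (0:ℝ)..t, A j.1 i.1 * exp ((t - s) • B) i r * I m.1 r.1 s)
          = ∫ s in (0:ℝ)..t, ∑ m : {m : Ω // ¬ π m = α},
              A j.1 i.1 * exp ((t - s) • B) i r * I m.1 r.1 s := by
      intro r
      refine (intervalIntegral.integral_finset_sum fun m _ => ?_).symm
      exact ((continuous_const.mul ((hcontE i r).comp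
        (continuous_const.sub continuous_id))).mul (hIcont m.1 r.1)).intervalIntegrable 0 t
    simp only [hswap]
    rw [← intervalIntegral.integral_finset_sum]
    · have hintegrand : ∀ s : ℝ,
          (∑ r : {r : Ω // π r = α}, ∑ m : {m : Ω // ¬ π m = α},
              A j.1 i.1 * exp ((t - s) • B) i r * I m.1 r.1 s)
            = A j.1 i.1 * ∑ r : {r : Ω // π r = α}, exp ((t - s) • B) i r * f s r := by
        intro s
        rw [Finset.mul_sum]
        refine Finset.sum_congr rfl fun r _ => ?_
        simp only [hI, hf, Finset.mul_sum]
        exact Finset.sum_congr rfl fun m _ => by ring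
      simp only [hintegrand]
      rw [intervalIntegral.integral_const_mul]
      have hbar : (∑ r : {r : Ω // π r = α}, A j.1 i.1 * exp (t • B) i r * n0 r.1)
          = A j.1 i.1 * ∑ r : {r : Ω // π r = α}, exp (t • B) i r * n0 r.1 := by
        rw [Finset.mul_sum]
        exact Finset.sum_congr rfl fun r _ => by ring
      rw [hbar, hmain]
      ring
    · intro r _
      apply Continuous.intervalIntegrable
      apply continuous_finset_sum
      intro m _
      exact (continuous_const.mul ((hcontE i r).comp
        (continuous_const.sub continuous_id))).mul (hIcont m.1 r.1)
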